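/- arXiv:1412.0537 — 6 statements merged into one kernel-verified Lean document; each statement's English description precedes it below -/
import Mathlib

section
/- If σ1 and σ2 are copyless substitutions (each variable occurs at most once in the union of the images σ(X) over X ∈ X), then their composition σ1 σ2 is also copyless. -/
namespace SSTPaper

/-- Homomorphic extension of a substitution, fixing output letters. -/
def ext {X Γ : Type} (σ : X → List (Γ ⊕ X)) : List (Γ ⊕ X) → List (Γ ⊕ X) :=
  fun w => w.flatMap (Sum.elim (fun g => [Sum.inl g]) σ)

/-- Composition of substitutions: (σ1 σ2)(x) = σ̂1(σ2 x). -/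
def comp {X Γ : Type} (σ1 σ2 : X → List (Γ ⊕ X)) : X → List (Γ ⊕ X) :=
  fun x => ext σ1 (σ2 x)

/-- The identity substitution. -/
def idSubst {X Γ : Type} : X → List (Γ ⊕ X) := fun x => [Sum.inr x]

end SSTPaper

namespace SSTPaper

/-- A substitution is copyless if every variable occurs at most once in the
    concatenation of the images σ(x) over all variables x. -/
def Copyless {X Γ : Type} [Fintype X] [DecidableEq X] [DecidableEq Γ]
    (σ : X → List (Γ ⊕ X)) : Prop :=
  ∀ y : X, ∑ x : X, (σ x).count (Sum.inr y) ≤ 1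

lemma count_ext {X Γ : Type} [Fintype X] [DecidableEq X] [DecidableEq Γ]
    (σ : X → List (Γ ⊕ X)) (y : X) (w : List (Γ ⊕ X)) :
    (ext σ w).count (Sum.inr y) =
      ∑ z : X, w.count (Sum.inr z) * (σ z).count (Sum.inr y) := by
  induction w with
  | nil => simp [ext]
  | cons a w ih =>
    have hext : ext σ (a :: w) = Sum.elim (fun g => [Sum.inl g]) σ a ++ ext σ w := by
      simp [ext]
    rw [hext, List.count_append, ih]
    cases a with
    | inl g =>
      have hf : ∀ z : X, ((Sum.inl g : Γ ⊕ X) == Sum.inr z) = false := fun _ => rfl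
      simp [List.count_cons, hf]
    | inr x =>
      simp only [Sum.elim_inr, List.count_cons, add_mul, Finset.sum_add_distrib]
      rw [add_comm]
      congr 1
      have key : ∀ z : X, (if ((Sum.inr x : Γ ⊕ X) == Sum.inr z) = true then 1 else 0) *
          (σ z).count (Sum.inr y) = if x = z then (σ z).count (Sum.inr y) else 0 := by
        have hbeq : ∀ a b : X, ((Sum.inr a : Γ ⊕ X) == Sum.inr b) = decide (a = b) := fun _ _ => rfl
        intro z; by_cases h : x = z <;> simp [hbeq, h]
      rw [Finset.sum_congr rfl fun z _ => key z, Finset.sum_ite_eq]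
      simp

/-- The composition of two copyless substitutions is copyless. -/
theorem copyless_comp {X Γ : Type} [Fintype X] [DecidableEq X] [DecidableEq Γ]
    (σ₁ σ₂ : X → List (Γ ⊕ X)) (h₁ : Copyless σ₁) (h₂ : Copyless σ₂) :
    Copyless (comp σ₁ σ₂) := by
  intro y
  calc ∑ x : X, (comp σ₁ σ₂ x).count (Sum.inr y)
      = ∑ x : X, ∑ z : X, (σ₂ x).count (Sum.inr z) * (σ₁ z).count (Sum.inr y) := by
        simp [comp, count_ext]
    _ = ∑ z : X, (∑ x : X, (σ₂ x).count (Sum.inr z)) * (σ₁ z).count (Sum.inr y) := by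
        rw [Finset.sum_comm]; simp [Finset.sum_mul]
    _ ≤ ∑ z : X, (σ₁ z).count (Sum.inr y) := by
        apply Finset.sum_le_sum
        intro z _
        calc (∑ x : X, (σ₂ x).count (Sum.inr z)) * (σ₁ z).count (Sum.inr y)
            ≤ 1 * (σ₁ z).count (Sum.inr y) := Nat.mul_le_mul_right _ (h₂ z)
          _ = (σ₁ z).count (Sum.inr y) := one_mul _
    _ ≤ 1 := h₁ y

end SSTPaper
end

section
/- The relation defined by the synchronized product of two nondeterministic SSTs T1 and T2 is exactly the set of pairs (w, (w1, w2)) such that (w, w1) ∈ ⟦T1⟧ and (w, w2) ∈ ⟦T2⟧. -/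
namespace SSTPaper

/-- Erase variables and keep output letters, after applying σ to a variable word:
    this computes σ_ε σ (xs). -/
def evalOut {X Γ : Type} (σ : X → List (Γ ⊕ X)) (xs : List X) : List Γ :=
  (xs.flatMap σ).filterMap (Sum.elim some (fun _ => none))

/-- Nondeterministic streaming string transducer. -/
structure NSST (S Γ Q X : Type) where
  init : Q
  final : Q → Prop
  delta : Q → S → Q → Prop
  rho : Q → S → Q → X → List (Γ ⊕ X)
  out : Q → List X

/-- Nondeterministic biSST: like an SST but outputs a pair of variable words. -/
structure BiSST (S Γ Q X : Type) where
  init : Q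
  final : Q → Prop
  delta : Q → S → Q → Prop
  rho : Q → S → Q → X → List (Γ ⊕ X)
  out : Q → List X × List X

/-- Runs of an SST, together with the induced substitution
    σ_r = ρ(t₁) ρ(t₂) ⋯ ρ(t_n) (left-to-right composition). -/
inductive Run {S Γ Q X : Type} (T : NSST S Γ Q X) :
    Q → List S → Q → (X → List (Γ ⊕ X)) → Prop
  | nil (q : Q) : Run T q [] q idSubst
  | cons {q q' q'' : Q} {a : S} {w : List S} {σ : X → List (Γ ⊕ X)} :
      T.delta q a q' → Run T q' w q'' σ →
      Run T q (a :: w) q'' (comp (T.rho q a q') σ)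

/-- Runs of a biSST, with induced substitution. -/
inductive BiRun {S Γ Q X : Type} (T : BiSST S Γ Q X) :
    Q → List S → Q → (X → List (Γ ⊕ X)) → Prop
  | nil (q : Q) : BiRun T q [] q idSubst
  | cons {q q' q'' : Q} {a : S} {w : List S} {σ : X → List (Γ ⊕ X)} :
      T.delta q a q' → BiRun T q' w q'' σ →
      BiRun T q (a :: w) q'' (comp (T.rho q a q') σ)

/-- The relation ⟦T⟧ ⊆ Σ* × Γ* defined by a nondeterministic SST. -/
def NSST.Rel {S Γ Q X : Type} (T : NSST S Γ Q X) (w : List S) (o : List Γ) : Prop :=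
  ∃ q σ, Run T T.init w q σ ∧ T.final q ∧ o = evalOut σ (T.out q)

/-- The relation defined by a biSST (input, pair of outputs). -/
def BiSST.Rel {S Γ Q X : Type} (T : BiSST S Γ Q X) (w : List S)
    (o : List Γ × List Γ) : Prop :=
  ∃ q σ, BiRun T T.init w q σ ∧ T.final q ∧
    o.1 = evalOut σ (T.out q).1 ∧ o.2 = evalOut σ (T.out q).2

/-- Domain of an SST. -/
def NSST.Dom {S Γ Q X : Type} (T : NSST S Γ Q X) : Set (List S) :=
  {w | ∃ o, T.Rel w o}

/-- Domain of a biSST. -/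
def BiSST.Dom {S Γ Q X : Type} (T : BiSST S Γ Q X) : Set (List S) :=
  {w | ∃ o, T.Rel w o}

/-- A biSST is diagonal if every output pair has equal components. -/
def BiSST.Diagonal {S Γ Q X : Type} (T : BiSST S Γ Q X) : Prop :=
  ∀ w o₁ o₂, T.Rel w (o₁, o₂) → o₁ = o₂

/-- A nondeterministic SST is functional if it defines a partial function. -/
def NSST.Functional {S Γ Q X : Type} (T : NSST S Γ Q X) : Prop :=
  ∀ w o₁ o₂, T.Rel w o₁ → T.Rel w o₂ → o₁ = o₂

/-- Determinism of a transition relation. -/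
def DetRel {Q S : Type} (δ : Q → S → Q → Prop) : Prop :=
  ∀ q a q₁ q₂, δ q a q₁ → δ q a q₂ → q₁ = q₂

/-- Rename variables inside a word over Γ ∪ X. -/
def mapV {Γ X X' : Type} (f : X → X') : List (Γ ⊕ X) → List (Γ ⊕ X') :=
  List.map (Sum.map id f)

/-- Synchronized product of two nondeterministic SSTs, as a biSST. -/
def prodSST {S Γ Q₁ Q₂ X₁ X₂ : Type} (T₁ : NSST S Γ Q₁ X₁) (T₂ : NSST S Γ Q₂ X₂) :
    BiSST S Γ (Q₁ × Q₂) (X₁ ⊕ X₂) where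
  init := (T₁.init, T₂.init)
  final := fun p => T₁.final p.1 ∧ T₂.final p.2
  delta := fun p a p' => T₁.delta p.1 a p'.1 ∧ T₂.delta p.2 a p'.2
  rho := fun p a p' =>
    Sum.elim (fun x₁ => mapV Sum.inl (T₁.rho p.1 a p'.1 x₁))
             (fun x₂ => mapV Sum.inr (T₂.rho p.2 a p'.2 x₂))
  out := fun p => ((T₁.out p.1).map Sum.inl, (T₂.out p.2).map Sum.inr)

end SSTPaper

namespace SSTPaper

/-- Pairing of two substitutions into one over the disjoint union. -/
def pairSubst {Γ X₁ X₂ : Type} (σ₁ : X₁ → List (Γ ⊕ X₁)) (σ₂ : X₂ → List (Γ ⊕ X₂)) :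
    (X₁ ⊕ X₂) → List (Γ ⊕ (X₁ ⊕ X₂)) :=
  Sum.elim (fun x => mapV Sum.inl (σ₁ x)) (fun x => mapV Sum.inr (σ₂ x))

lemma pairSubst_id {Γ X₁ X₂ : Type} :
    pairSubst (Γ := Γ) (X₁ := X₁) (X₂ := X₂) idSubst idSubst = idSubst := by
  funext x; cases x <;> rfl

lemma ext_pair_mapL {Γ X₁ X₂ : Type} (σ₁ : X₁ → List (Γ ⊕ X₁)) (σ₂ : X₂ → List (Γ ⊕ X₂))
    (w : List (Γ ⊕ X₁)) :
    ext (pairSubst σ₁ σ₂) (mapV Sum.inl w) = mapV Sum.inl (ext σ₁ w) := by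
  induction w with
  | nil => rfl
  | cons a w ih =>
      cases a <;>
      · simp only [mapV, ext, pairSubst, List.map_cons, List.flatMap_cons, List.map_append,
          Sum.map_inl, Sum.map_inr, id_eq, Sum.elim_inl, Sum.elim_inr, List.map_nil,
          List.singleton_append, List.cons_append, List.nil_append] at ih ⊢
        rw [ih]

lemma ext_pair_mapR {Γ X₁ X₂ : Type} (σ₁ : X₁ → List (Γ ⊕ X₁)) (σ₂ : X₂ → List (Γ ⊕ X₂))
    (w : List (Γ ⊕ X₂)) :
    ext (pairSubst σ₁ σ₂) (mapV Sum.inr w) = mapV Sum.inr (ext σ₂ w) := by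
  induction w with
  | nil => rfl
  | cons a w ih =>
      cases a <;>
      · simp only [mapV, ext, pairSubst, List.map_cons, List.flatMap_cons, List.map_append,
          Sum.map_inl, Sum.map_inr, id_eq, Sum.elim_inl, Sum.elim_inr, List.map_nil,
          List.singleton_append, List.cons_append, List.nil_append] at ih ⊢
        rw [ih]

lemma pairSubst_comp {Γ X₁ X₂ : Type} (ρ₁ σ₁ : X₁ → List (Γ ⊕ X₁))
    (ρ₂ σ₂ : X₂ → List (Γ ⊕ X₂)) :
    comp (pairSubst ρ₁ ρ₂) (pairSubst σ₁ σ₂) = pairSubst (comp ρ₁ σ₁) (comp ρ₂ σ₂) := by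
  funext x
  cases x with
  | inl x => exact ext_pair_mapL ρ₁ ρ₂ (σ₁ x)
  | inr x => exact ext_pair_mapR ρ₁ ρ₂ (σ₂ x)

lemma evalOut_pair_left {Γ X₁ X₂ : Type} (σ₁ : X₁ → List (Γ ⊕ X₁)) (σ₂ : X₂ → List (Γ ⊕ X₂))
    (xs : List X₁) :
    evalOut (pairSubst σ₁ σ₂) (xs.map Sum.inl) = evalOut σ₁ xs := by
  induction xs with
  | nil => rfl
  | cons x xs ih =>
      simp only [evalOut, List.map_cons, List.flatMap_cons, List.filterMap_append] at *
      rw [ih]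
      congr 1
      show ((σ₁ x).map (Sum.map id Sum.inl)).filterMap _ = _
      induction (σ₁ x) with
      | nil => rfl
      | cons a t iht => cases a <;> simp_all [Sum.map, List.filterMap_cons]

lemma evalOut_pair_right {Γ X₁ X₂ : Type} (σ₁ : X₁ → List (Γ ⊕ X₁)) (σ₂ : X₂ → List (Γ ⊕ X₂))
    (xs : List X₂) :
    evalOut (pairSubst σ₁ σ₂) (xs.map Sum.inr) = evalOut σ₂ xs := by
  induction xs with
  | nil => rfl
  | cons x xs ih =>
      simp only [evalOut, List.map_cons, List.flatMap_cons, List.filterMap_append] at *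
      rw [ih]
      congr 1
      show ((σ₂ x).map (Sum.map id Sum.inr)).filterMap _ = _
      induction (σ₂ x) with
      | nil => rfl
      | cons a t iht => cases a <;> simp_all [Sum.map, List.filterMap_cons]

lemma birun_iff {S Γ Q₁ Q₂ X₁ X₂ : Type} (T₁ : NSST S Γ Q₁ X₁) (T₂ : NSST S Γ Q₂ X₂)
    (w : List S) (p p' : Q₁ × Q₂) (σ : (X₁ ⊕ X₂) → List (Γ ⊕ (X₁ ⊕ X₂))) :
    BiRun (prodSST T₁ T₂) p w p' σ ↔
      ∃ σ₁ σ₂, σ = pairSubst σ₁ σ₂ ∧ Run T₁ p.1 w p'.1 σ₁ ∧ Run T₂ p.2 w p'.2 σ₂ := by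
  constructor
  · intro h
    induction h with
    | nil q => exact ⟨idSubst, idSubst, pairSubst_id.symm, Run.nil _, Run.nil _⟩
    | cons hd hr ih =>
        obtain ⟨σ₁, σ₂, rfl, h1, h2⟩ := ih
        exact ⟨_, _, pairSubst_comp _ _ _ _,
          Run.cons hd.1 h1, Run.cons hd.2 h2⟩
  · rintro ⟨σ₁, σ₂, rfl, h1, h2⟩
    obtain ⟨pa, pb⟩ := p
    obtain ⟨pa', pb'⟩ := p'
    induction w generalizing pa pb σ₁ σ₂ with
    | nil =>
        cases h1; cases h2
        rw [pairSubst_id]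
        exact BiRun.nil _
    | cons a w ih =>
        cases h1 with
        | cons hd1 hr1 =>
            cases h2 with
            | cons hd2 hr2 =>
                rw [← pairSubst_comp]
                exact BiRun.cons (q' := (_, _)) ⟨hd1, hd2⟩ (ih _ _ _ _ hr1 hr2)

/-- ⟦T₁ ⊗ T₂⟧ = {(w, (w₁, w₂)) : (w, w₁) ∈ ⟦T₁⟧ and (w, w₂) ∈ ⟦T₂⟧}. -/
theorem prod_rel {S Γ Q₁ Q₂ X₁ X₂ : Type}
    (T₁ : NSST S Γ Q₁ X₁) (T₂ : NSST S Γ Q₂ X₂) :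
    ∀ (w : List S) (w₁ w₂ : List Γ),
      (prodSST T₁ T₂).Rel w (w₁, w₂) ↔ T₁.Rel w w₁ ∧ T₂.Rel w w₂ := by
  intro w w₁ w₂
  constructor
  · rintro ⟨q, σ, hr, hf, h1, h2⟩
    obtain ⟨σ₁, σ₂, rfl, hr1, hr2⟩ := (birun_iff T₁ T₂ w _ q σ).1 hr
    refine ⟨⟨q.1, σ₁, hr1, hf.1, ?_⟩, ⟨q.2, σ₂, hr2, hf.2, ?_⟩⟩
    · exact h1.trans (evalOut_pair_left σ₁ σ₂ (T₁.out q.1))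
    · exact h2.trans (evalOut_pair_right σ₁ σ₂ (T₂.out q.2))
  · rintro ⟨⟨q₁, σ₁, hr1, hf1, h1⟩, ⟨q₂, σ₂, hr2, hf2, h2⟩⟩
    refine ⟨(q₁, q₂), pairSubst σ₁ σ₂,
      (birun_iff T₁ T₂ w _ _ _).2 ⟨σ₁, σ₂, rfl, hr1, hr2⟩, ⟨hf1, hf2⟩, ?_, ?_⟩
    · simpa [prodSST, evalOut_pair_left] using h1
    · simpa [prodSST, evalOut_pair_right] using h2

end SSTPaper
end

section
/- Given an HDT0L instance I = (A, B, h1,…,hn, h, g1,…,gn, g, v, w), the two deterministic SSTs T1 and T2 constructed from I (over input alphabet {0,1,…,n}, variables {X_a : a ∈ A}, with initial transition on letter 0 setting X_a := h(a) (resp. g(a)) and loop transitions on letter i setting X_a := rename(h_i(a)) (resp. rename(g_i(a))), and outputs rename(v), rename(w)) satisfy: for every sequence i1,…,ik ∈ {1,…,n}, T1(0 i1 … ik) = h(h_{i1}(… h_{ik}(v)…)) and T2(0 i1 … ik) = g(g_{i1}(… g_{ik}(w)…)). -/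
namespace SSTPaper

/-- Apply a monoid morphism (given by its action on letters) to a word. -/
def mapply {A B : Type} (f : A → List B) (w : List A) : List B := w.flatMap f

/-- Value h(h_{i₁}( … h_{i_k}(v) … )) of an HDT0L instance on an index sequence. -/
def hdtVal {A B : Type} {n : ℕ} (hs : Fin n → A → List A) (h : A → List B)
    (l : List (Fin n)) (v : List A) : List B :=
  mapply h (l.foldr (fun i w => mapply (hs i) w) v)

/-- Validity of an HDT0L instance. -/
def HDT0LValid {A B : Type} {n : ℕ} (hs gs : Fin n → A → List A)
    (h g : A → List B) (v w : List A) : Prop :=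
  ∀ l : List (Fin n), hdtVal hs h l v = hdtVal gs g l w

end SSTPaper

namespace SSTPaper

/-- The SST constructed from (one side of) an HDT0L instance:
    states q₀ = false, q₁ = true, input alphabet {0} ∪ {1,…,n} modeled as
    Option (Fin n) (none is the letter 0), variables X_a for a ∈ A. -/
def hdtSST {A B : Type} {n : ℕ} (hs : Fin n → A → List A) (h : A → List B)
    (v : List A) : NSST (Option (Fin n)) B Bool A where
  init := false
  final := fun q => q = true
  delta := fun q s q' =>
    (q = false ∧ s = none ∧ q' = true) ∨ (q = true ∧ (∃ i, s = some i) ∧ q' = true)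
  rho := fun _ s _ =>
    match s with
    | none => fun a => (h a).map Sum.inl
    | some i => fun a => (hs i a).map Sum.inr
  out := fun _ => v

end SSTPaper

namespace SSTPaper

/-- The substitution induced by the loop part of a run on `l`. -/
def loopW {A : Type} {n : ℕ} (hs : Fin n → A → List A) (l : List (Fin n)) (a : A) :
    List A :=
  l.foldr (fun i w => mapply (hs i) w) [a]

lemma ext_map_inr {X Γ : Type} (σ : X → List (Γ ⊕ X)) (u : List X) :
    ext σ (u.map Sum.inr) = u.flatMap σ := by
  simp [ext, List.flatMap_map]

lemma foldr_mapply_eq {A : Type} {n : ℕ} (hs : Fin n → A → List A)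
    (l : List (Fin n)) (u : List A) :
    l.foldr (fun i w => mapply (hs i) w) u = u.flatMap (loopW hs l) := by
  induction l generalizing u with
  | nil => exact (List.flatMap_singleton' u).symm
  | cons i l ih =>
      simp only [List.foldr_cons]
      rw [ih]
      simp only [mapply, List.flatMap_assoc]
      rfl

lemma loopW_cons {A : Type} {n : ℕ} (hs : Fin n → A → List A)
    (i : Fin n) (l : List (Fin n)) (a : A) :
    loopW hs (i :: l) a = mapply (hs i) (loopW hs l a) := rfl

lemma comp_loop {A B : Type} {n : ℕ} (hs : Fin n → A → List A)
    (i : Fin n) (l : List (Fin n)) :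
    comp (fun a => ((hs i a).map Sum.inr : List (B ⊕ A)))
      (fun a => (loopW hs l a).map Sum.inr)
      = fun a => (loopW hs (i :: l) a).map Sum.inr := by
  funext a
  simp [comp, ext_map_inr, loopW_cons, mapply, List.map_flatMap]

lemma run_loop {A B : Type} {n : ℕ} (hs : Fin n → A → List A) (h : A → List B)
    (v : List A) :
    ∀ (l : List (Fin n)) (q : Bool) (σ : A → List (B ⊕ A)),
      Run (hdtSST hs h v) true (l.map some) q σ →
      q = true ∧ σ = fun a => (loopW hs l a).map Sum.inr := by
  intro l
  induction l with
  | nil =>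
      intro q σ hr
      cases hr
      exact ⟨rfl, by funext a; simp [idSubst, loopW]⟩
  | cons i l ih =>
      intro q σ hr
      cases hr with
      | cons hd hrest =>
          rename_i q' _
          have hq' : q' = true := by
            rcases hd with ⟨hq, _, _⟩ | ⟨_, _, hq'⟩
            · simp [hdtSST] at hq
            · exact hq'
          subst hq'
          obtain ⟨hq, hσ⟩ := ih _ _ hrest
          refine ⟨hq, ?_⟩
          rw [hσ]
          exact comp_loop hs i l
  
lemma run_loop_exists {A B : Type} {n : ℕ} (hs : Fin n → A → List A)
    (h : A → List B) (v : List A) (l : List (Fin n)) :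
    Run (hdtSST hs h v) true (l.map some) true
      (fun a => (loopW hs l a).map Sum.inr) := by
  induction l with
  | nil =>
      have : (fun a : A => (loopW hs ([] : List (Fin n)) a).map Sum.inr)
          = (idSubst : A → List (B ⊕ A)) := by
        funext a; simp [idSubst, loopW]
      rw [this]
      exact Run.nil _
  | cons i l ih =>
      rw [← comp_loop hs i l]
      exact Run.cons (Or.inr ⟨rfl, ⟨i, rfl⟩, rfl⟩) ih

lemma hdtSST_rel {A B : Type} {n : ℕ} (hs : Fin n → A → List A)
    (h : A → List B) (v : List A) (l : List (Fin n)) (o : List B) :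
    (hdtSST hs h v).Rel (none :: l.map some) o ↔ o = hdtVal hs h l v := by
  have key : evalOut (comp (fun a : A => ((h a).map Sum.inl : List (B ⊕ A)))
      (fun a => (loopW hs l a).map Sum.inr)) v = hdtVal hs h l v := by
    simp only [evalOut, comp, ext_map_inr, hdtVal]
    rw [foldr_mapply_eq]
    simp [comp, ext_map_inr, mapply, List.flatMap_assoc, List.filterMap_flatMap,
      List.filterMap_map, Function.comp_def]
  constructor
  · rintro ⟨q, σ, hr, hfin, rfl⟩
    cases hr with
    | cons hd hrest =>
        rename_i q' _
        have hq' : q' = true := by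
          rcases hd with ⟨_, _, hq'⟩ | ⟨hq, ⟨i, hi⟩, _⟩
          · exact hq'
          · exact absurd hi (by simp)
        subst hq'
        obtain ⟨hq, hσ⟩ := run_loop hs h v l _ _ hrest
        rw [hσ]
        exact key
  · rintro rfl
    refine ⟨true, _, Run.cons (Or.inl ⟨rfl, rfl, rfl⟩)
      (run_loop_exists hs h v l), rfl, key.symm⟩

/-- The SSTs T₁ and T₂ built from an HDT0L instance compute
    T₁(0 i₁ … i_k) = h(h_{i₁}(… h_{i_k}(v) …)) and
    T₂(0 i₁ … i_k) = g(g_{i₁}(… g_{i_k}(w) …)). -/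
theorem hdtSST_output {A B : Type} {n : ℕ}
    (hs gs : Fin n → A → List A) (h g : A → List B) (v w : List A) :
    ∀ l : List (Fin n),
      (∀ o : List B, (hdtSST hs h v).Rel (none :: l.map some) o ↔ o = hdtVal hs h l v) ∧
      (∀ o : List B, (hdtSST gs g w).Rel (none :: l.map some) o ↔ o = hdtVal gs g l w) := by
  intro l
  exact ⟨hdtSST_rel hs h v l, hdtSST_rel gs g w l⟩

end SSTPaper
end

section
/- For the HDT0L-to-SST construction, the substitution σ_r induced by the run of T1 on input 0 i1 … ik sends each variable X_a to h(h_{i1}(… h_{ik}(a)…)), for every a ∈ A. -/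
namespace SSTPaper

theorem hdtSST_run_aux {A B : Type} {n : ℕ}
    (hs : Fin n → A → List A) (h : A → List B) (v : List A) :
    ∀ (l : List (Fin n)) (q q0 : Bool) (σ : A → List (B ⊕ A)),
      Run (hdtSST hs h v) q0 (l.map some) q σ →
      ∀ a : A, σ a = (l.foldr (fun i w => mapply (hs i) w) [a]).map Sum.inr := by
  intro l
  induction l with
  | nil =>
    intro q q0 σ hr a
    cases hr
    simp [idSubst, mapply]
  | cons i t ih =>
    intro q q0 σ hr a
    cases hr with
    | cons hd hrest =>
      rename_i q' σ'
      have hσ' := ih q q' σ' hrest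
      simp only [comp, List.foldr_cons]
      rw [hσ']
      show ext (fun a => (hs i a).map Sum.inr) _ = _
      generalize (t.foldr (fun i w => mapply (hs i) w) [a]) = w
      induction w with
      | nil => simp [ext, mapply]
      | cons b t' ihw =>
        simp_all [ext, mapply]

/-- The substitution induced by the run of T₁ on 0 i₁ … i_k sends each
    variable X_a to h(h_{i₁}(… h_{i_k}(a) …)). -/
theorem hdtSST_run_subst {A B : Type} {n : ℕ}
    (hs : Fin n → A → List A) (h : A → List B) (v : List A) :
    ∀ (l : List (Fin n)) (q : Bool) (σ : A → List (B ⊕ A)),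
      Run (hdtSST hs h v) (hdtSST hs h v).init (none :: l.map some) q σ →
      ∀ a : A, σ a = (hdtVal hs h l [a]).map Sum.inl := by
  intro l q σ hr a
  cases hr with
  | cons hd hrest =>
    rename_i q' σ'
    have hσ' := hdtSST_run_aux hs h v l q q' σ' hrest
    simp only [comp]
    rw [hσ' a]
    show ext (fun a => (h a).map Sum.inl) _ = _
    unfold hdtVal
    generalize (l.foldr (fun i w => mapply (hs i) w) [a]) = w
    induction w with
    | nil => simp [ext, mapply]
    | cons b t' ihw => simp_all [ext, mapply]

end SSTPaper
end

section
/- In the biSST-to-HDT0L reduction, for every accepting run r : q0 →^{t1} q1 →^{t2} ⋯ →^{tn} q of the biSST T on input u, and both i = 1,2, the morphism composition satisfies f_{q0}(f_{t1}(… f_{tn}(f_q^i(#)…))) = π_i(T(u)), the i-th component of the output of T on u. -/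
namespace SSTPaper

/-- Runs of a biSST recording the list of transitions used. -/
inductive BiRunL {S Γ Q X : Type} (T : BiSST S Γ Q X) :
    Q → List S → Q → List (Q × S × Q) → Prop
  | nil (q : Q) : BiRunL T q [] q []
  | cons {q q' q'' : Q} {a : S} {w : List S} {ts : List (Q × S × Q)} :
      T.delta q a q' → BiRunL T q' w q'' ts →
      BiRunL T q (a :: w) q'' ((q, a, q') :: ts)

/-- The substitution induced by a list of transitions of a biSST:
    σ = ρ(t₁) ρ(t₂) ⋯ ρ(t_n). -/
def bsubstOf {S Γ Q X : Type} (T : BiSST S Γ Q X) (ts : List (Q × S × Q)) :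
    X → List (Γ ⊕ X) :=
  ts.foldr (fun t σ => comp (T.rho t.1 t.2.1 t.2.2) σ) idSubst

end SSTPaper

namespace SSTPaper

/-- Base letters X ∪ Γ ∪ {$, #} of the HDT0L alphabet built from a biSST:
    `Sum.inr (Sum.inr false)` is $ and `Sum.inr (Sum.inr true)` is #. -/
abbrev BaseL (X Γ : Type) := X ⊕ Γ ⊕ Bool

/-- The HDT0L alphabet A = {α_q : α ∈ X ∪ Γ ∪ {$,#}, q ∈ Q} ∪ {#};
    `Sum.inr ()` is the unsubscripted letter #. -/
abbrev ALet (X Γ Q : Type) := (BaseL X Γ × Q) ⊕ Unit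

/-- The morphism subscript_q. -/
def subscr {X Γ Q : Type} (q : Q) (α : BaseL X Γ) : ALet X Γ Q := Sum.inl (α, q)

/-- The morphism f_q^i for a final state q; `i = true` selects the first
    component π₁(F(q)) and `i = false` the second. It sends # to
    subscript_q($ · π_i(F(q))) and everything else to ε. -/
def fFin {S Γ Q X : Type} (T : BiSST S Γ Q X) (q : Q) (i : Bool) :
    ALet X Γ Q → List (ALet X Γ Q) :=
  fun α => match α with
    | Sum.inr _ =>
        subscr q (Sum.inr (Sum.inr false)) ::
          (cond i (T.out q).1 (T.out q).2).map (fun x => subscr q (Sum.inl x))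
    | _ => []

/-- The morphism f_t for a transition t = (q, a, q'). -/
def fTr {S Γ Q X : Type} [DecidableEq Q] (T : BiSST S Γ Q X) (t : Q × S × Q) :
    ALet X Γ Q → List (ALet X Γ Q) :=
  fun α => match α with
    | Sum.inl (Sum.inl x, p) =>
        if p = t.2.2 then
          (T.rho t.1 t.2.1 t.2.2 x).map
            (fun l => subscr t.1 (Sum.elim (fun g => Sum.inr (Sum.inl g)) Sum.inl l))
        else []
    | Sum.inl (Sum.inr (Sum.inl g), p) =>
        if p = t.2.2 then [subscr t.1 (Sum.inr (Sum.inl g))] else []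
    | Sum.inl (Sum.inr (Sum.inr false), p) =>
        if p = t.2.2 then [subscr t.1 (Sum.inr (Sum.inr false))] else []
    | _ => []

/-- The final morphism f_{q₀} : A* → B* = Γ*. -/
def fOut {S Γ Q X : Type} [DecidableEq Q] (T : BiSST S Γ Q X) :
    ALet X Γ Q → List Γ :=
  fun α => match α with
    | Sum.inl (Sum.inr (Sum.inl g), p) => if p = T.init then [g] else []
    | _ => []

end SSTPaper

namespace SSTPaper

/-- Encode a letter of Γ ⊕ X as a base letter. -/
def encL {Γ X : Type} : (Γ ⊕ X) → BaseL X Γ :=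
  Sum.elim (fun g => Sum.inr (Sum.inl g)) Sum.inl

/-- Encode a word over Γ ⊕ X as a word over the HDT0L alphabet, subscripted by p. -/
def encW {Γ X Q : Type} (p : Q) (w : List (Γ ⊕ X)) : List (ALet X Γ Q) :=
  w.map (fun l => subscr p (encL l))

lemma ext_id {Γ X : Type} (w : List (Γ ⊕ X)) : ext (idSubst (Γ := Γ)) w = w := by
  induction w with
  | nil => rfl
  | cons a w ih => cases a <;> simp [ext, idSubst] at ih ⊢ <;> exact ih

lemma ext_comp {Γ X : Type} (σ1 σ2 : X → List (Γ ⊕ X)) (w : List (Γ ⊕ X)) :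
    ext σ1 (ext σ2 w) = ext (comp σ1 σ2) w := by
  induction w with
  | nil => rfl
  | cons a w ih =>
    cases a with
    | inl g => simp [ext, comp] at ih ⊢; exact ih
    | inr x => simp [ext, comp] at ih ⊢; exact ih

lemma mapply_fTr_encW {S Γ Q X : Type} [DecidableEq Q] (T : BiSST S Γ Q X)
    (t : Q × S × Q) (w : List (Γ ⊕ X)) :
    mapply (fTr T t) (encW t.2.2 w) = encW t.1 (ext (T.rho t.1 t.2.1 t.2.2) w) := by
  induction w with
  | nil => rfl
  | cons a w ih =>
    cases a with
    | inl g => simp [mapply, encW, encL, ext, fTr, subscr] at ih ⊢; exact ih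
    | inr x =>
      simp [mapply, encW, encL, ext, fTr, subscr] at ih ⊢
      exact ih

lemma foldr_fTr {S Γ Q X : Type} [DecidableEq Q] (T : BiSST S Γ Q X) :
    ∀ (p : Q) (u : List S) (q : Q) (ts : List (Q × S × Q)),
      BiRunL T p u q ts → ∀ w0 : List (Γ ⊕ X),
      ts.foldr (fun t w => mapply (fTr T t) w)
          (subscr q (Sum.inr (Sum.inr false)) :: encW q w0) =
        subscr p (Sum.inr (Sum.inr false)) :: encW p (ext (bsubstOf T ts) w0) := by
  intro p u q ts h
  induction h with
  | nil q => intro w0; simp [bsubstOf, ext_id]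
  | @cons p p' q a u ts hd hr ih =>
    intro w0
    have : (((p, a, p') :: ts).foldr (fun t w => mapply (fTr T t) w)
        (subscr q (Sum.inr (Sum.inr false)) :: encW q w0)) =
        mapply (fTr T (p, a, p'))
          (subscr p' (Sum.inr (Sum.inr false)) :: encW p' (ext (bsubstOf T ts) w0)) := by
      simp [ih w0]
    rw [this]
    have h2 := mapply_fTr_encW T (p, a, p') (ext (bsubstOf T ts) w0)
    simp only [mapply, List.flatMap_cons] at h2 ⊢
    rw [h2, ext_comp]
    simp [bsubstOf, fTr, subscr]

lemma mapply_fOut_encW {S Γ Q X : Type} [DecidableEq Q] (T : BiSST S Γ Q X)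
    (w : List (Γ ⊕ X)) :
    mapply (fOut T) (encW T.init w) =
      w.filterMap (Sum.elim some (fun _ => none)) := by
  induction w with
  | nil => rfl
  | cons a w ih =>
    cases a <;> simp [mapply, encW, encL, fOut, subscr] at ih ⊢ <;> exact ih

/-- For every accepting run of the biSST T on input u, with transitions
    t₁, …, t_n ending in the final state q, and each i ∈ {1,2} (here `true`
    selects the first component), f_{q₀}(f_{t₁}(… f_{t_n}(f_q^i(#)) …))
    equals π_i(T(u)). -/
theorem reduction_run_output {S Γ Q X : Type} [DecidableEq Q]
    (T : BiSST S Γ Q X) :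
    ∀ (u : List S) (ts : List (Q × S × Q)) (q : Q),
      BiRunL T T.init u q ts → T.final q → ∀ i : Bool,
      mapply (fOut T)
          (ts.foldr (fun t w => mapply (fTr T t) w) (fFin T q i (Sum.inr ()))) =
        evalOut (bsubstOf T ts) (cond i (T.out q).1 (T.out q).2) := by
  intro u ts q hrun _hf i
  have hfin : fFin T q i (Sum.inr ()) =
      subscr q (Sum.inr (Sum.inr false)) ::
        encW q ((cond i (T.out q).1 (T.out q).2).map Sum.inr) := by
    simp [fFin, encW, encL]
  rw [hfin, foldr_fTr T T.init u q ts hrun]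
  rw [show (mapply (fOut T) = fun w => w.flatMap (fOut T)) from rfl]
  simp only [List.flatMap_cons]
  have : fOut T (subscr T.init (Sum.inr (Sum.inr false))) = [] := by
    simp [fOut, subscr]
  rw [this]
  simp only [List.nil_append]
  have h3 := mapply_fOut_encW T
      (ext (bsubstOf T ts) ((cond i (T.out q).1 (T.out q).2).map Sum.inr))
  simp only [mapply] at h3
  rw [h3]
  have hext : ext (bsubstOf T ts) ((cond i (T.out q).1 (T.out q).2).map Sum.inr) =
      (cond i (T.out q).1 (T.out q).2).flatMap (bsubstOf T ts) := by
    simp [ext, List.flatMap_map]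
  rw [hext]
  rfl

end SSTPaper
end

section
/- In the biSST-to-HDT0L reduction, for every sequence i1,…,ik over Qf ∪ δ that is not valid (i.e., it is not of the form t1,…,t_{k-1}, q with t1,…,t_{k-1} a run of T from q0 ending in the final state q = i_k), the morphism composition collapses to the empty word: f_{q0}(f_{i1}(… f_{ik}(#)…)) = ε, where f_{i} denotes f_{i}^1 or f_{i}^2 when i ∈ Qf and f_i when i ∈ δ. -/
namespace SSTPaper

variable {S Γ Q X : Type}

/-- An element of the index set Q_f ∪ δ of the HDT0L instance I_T. -/
def IdxEl (T : BiSST S Γ Q X) : Type :=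
  {q : Q // T.final q} ⊕ {t : Q × S × Q // T.delta t.1 t.2.1 t.2.2}

/-- The morphism associated with an index element: f_q^i (with `i = true`
    for f_q^1 and `i = false` for f_q^2) for a final state, f_t for a
    transition. -/
def idxMorph [DecidableEq Q] (T : BiSST S Γ Q X) (i : Bool) (e : IdxEl T) :
    ALet X Γ Q → List (ALet X Γ Q) :=
  Sum.elim (fun q => fFin T q.1 i) (fun t => fTr T t.1) e

/-- The composed word f_{i₁}(… f_{i_k}(#) …) for a sequence of indices. -/
def seqWord [DecidableEq Q] (T : BiSST S Γ Q X) (i : Bool) (l : List (IdxEl T)) :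
    List (ALet X Γ Q) :=
  l.foldr (fun e w => mapply (idxMorph T i e) w) [Sum.inr ()]

/-- A sequence over Q_f ∪ δ is valid if it consists of the transitions of a
    run of T from the initial state, followed by the final state this run
    reaches. -/
def ValidSeq (T : BiSST S Γ Q X) (l : List (IdxEl T)) : Prop :=
  ∃ (u : List S) (ts : List (Q × S × Q)) (q : Q) (hq : T.final q),
    BiRunL T T.init u q ts ∧
    l.map (Sum.map Subtype.val Subtype.val) =
      ts.map Sum.inr ++ [Sum.inl q]

end SSTPaper

namespace SSTPaper

lemma mapply_nil_of {A B : Type} (f : A → List B) (w : List A)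
    (h : ∀ a ∈ w, f a = []) : mapply f w = [] := by
  simp only [mapply, List.flatMap_eq_nil_iff]
  exact h

lemma seqWord_struct {S Γ Q X : Type} [DecidableEq Q] (T : BiSST S Γ Q X)
    (i : Bool) : ∀ l : List (IdxEl T),
    seqWord T i l = [] ∨ l = [] ∨
    ∃ (q : Q) (u : List S) (qf : Q) (_ : T.final qf) (ts : List (Q × S × Q)),
      BiRunL T q u qf ts ∧
      l.map (Sum.map Subtype.val Subtype.val) = ts.map Sum.inr ++ [Sum.inl qf] ∧
      ∀ a ∈ seqWord T i l, ∃ α, a = Sum.inl (α, q) := by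
  intro l
  induction l with
  | nil => exact Or.inr (Or.inl rfl)
  | cons e l ih =>
    have hseq : seqWord T i (e :: l) = mapply (idxMorph T i e) (seqWord T i l) := rfl
    rcases ih with h | h | ⟨q, u, qf, hf, ts, hrun, hmap, hsub⟩
    · left; rw [hseq, h]; rfl
    · subst h
      rcases e with ⟨q, hq⟩ | ⟨t, ht⟩
      · right; right
        refine ⟨q, [], q, hq, [], BiRunL.nil q, rfl, ?_⟩
        intro a ha
        simp only [seqWord, List.foldr, mapply, List.flatMap_cons, List.flatMap_nil,
          List.append_nil, idxMorph, Sum.elim_inl, fFin, subscr,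
          List.mem_cons, List.mem_map] at ha
        rcases ha with rfl | ⟨x, _, rfl⟩
        · exact ⟨_, rfl⟩
        · exact ⟨_, rfl⟩
      · left
        rfl
    · rcases e with ⟨q', hq'⟩ | ⟨t, ht⟩
      · left
        rw [hseq]
        apply mapply_nil_of
        intro a ha
        obtain ⟨α, rfl⟩ := hsub a ha
        rfl
      · by_cases hqt : t.2.2 = q
        · right; right
          refine ⟨t.1, t.2.1 :: u, qf, hf, t :: ts, ?_, ?_, ?_⟩
          · exact BiRunL.cons ht (hqt ▸ hrun)
          · exact congrArg (List.cons (Sum.inr t)) hmap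
          · intro a ha
            rw [hseq] at ha
            simp only [mapply, List.mem_flatMap] at ha
            obtain ⟨b, hb, hab⟩ := ha
            obtain ⟨α, rfl⟩ := hsub b hb
            have hq : q = t.2.2 := hqt.symm
            rcases α with x | g | b
            · simp only [idxMorph, Sum.elim_inr, fTr, if_pos hq,
                List.mem_map, subscr] at hab
              obtain ⟨c, _, rfl⟩ := hab
              exact ⟨_, rfl⟩
            · simp only [idxMorph, Sum.elim_inr, fTr, if_pos hq,
                List.mem_singleton, subscr] at hab
              subst hab
              exact ⟨_, rfl⟩
            · cases b
              · simp only [idxMorph, Sum.elim_inr, fTr, if_pos hq,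
                  List.mem_singleton, subscr] at hab
                subst hab
                exact ⟨_, rfl⟩
              · simp [idxMorph, fTr] at hab
        · left
          rw [hseq]
          apply mapply_nil_of
          intro a ha
          obtain ⟨α, rfl⟩ := hsub a ha
          have hq : ¬ q = t.2.2 := fun h => hqt h.symm
          rcases α with x | g | b
          · simp [idxMorph, fTr, hq]
          · simp [idxMorph, fTr, hq]
          · cases b
            · simp [idxMorph, fTr, hq]
            · simp [idxMorph, fTr]

/-- For every non-valid sequence over Q_f ∪ δ, the composed morphisms
    collapse to the empty word. -/
theorem reduction_invalid_collapse {S Γ Q X : Type} [DecidableEq Q]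
    (T : BiSST S Γ Q X) :
    ∀ l : List (IdxEl T), ¬ ValidSeq T l →
      ∀ i : Bool, mapply (fOut T) (seqWord T i l) = [] := by
  intro l hnv i
  rcases seqWord_struct T i l with h | h | ⟨q, u, qf, hf, ts, hrun, hmap, hsub⟩
  · rw [h]; rfl
  · subst h; rfl
  · have hq : q ≠ T.init := by
      intro h
      exact hnv ⟨u, ts, qf, hf, h ▸ hrun, hmap⟩
    apply mapply_nil_of
    intro a ha
    obtain ⟨α, rfl⟩ := hsub a ha
    rcases α with x | g | b
    · rfl
    · simp [fOut, hq]
    · rfl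

end SSTPaper
end
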